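/- arXiv:1812.02330 — 4 statements merged into one kernel-verified Lean document; each statement's English description precedes it below -/
import Mathlib

section
/- The subgroup of SL₂(ℤ) consisting of matrices [[a,b],[c,d]] with a ≡ d ≡ 1 (mod 4) and b ≡ c ≡ 0 (mod 2) has index 12 in SL₂(ℤ). -/
open Matrix

private def mk2 (a b c d : ℤ) (h : a * d - b * c = 1) :
    Matrix.SpecialLinearGroup (Fin 2) ℤ :=
  ⟨!![a, b; c, d], by simpa [Matrix.det_fin_two_of] using h⟩

def lifts : List (Matrix.SpecialLinearGroup (Fin 2) ℤ) :=
  [ mk2 1 0 0 1 (by decide),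
  mk2 0 (-1) 1 0 (by decide),
  mk2 1 1 0 1 (by decide),
  mk2 1 (-1) 0 1 (by decide),
  mk2 0 1 (-1) 0 (by decide),
  mk2 (-1) 0 0 (-1) (by decide),
  mk2 0 (-1) 1 1 (by decide),
  mk2 0 (-1) 1 (-1) (by decide),
  mk2 1 (-1) 1 0 (by decide),
  mk2 1 2 0 1 (by decide),
  mk2 (-1) 1 (-1) 0 (by decide),
  mk2 (-1) (-1) 1 0 (by decide),
  mk2 1 1 (-1) 0 (by decide),
  mk2 0 1 (-1) (-1) (by decide),
  mk2 0 1 (-1) 1 (by decide),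
  mk2 (-1) (-1) 0 (-1) (by decide),
  mk2 (-1) 1 0 (-1) (by decide),
  mk2 (-1) 0 1 (-1) (by decide),
  mk2 0 (-1) 1 2 (by decide),
  mk2 1 0 (-1) 1 (by decide),
  mk2 (-1) 0 (-1) (-1) (by decide),
  mk2 1 0 1 1 (by decide),
  mk2 1 (-2) 1 (-1) (by decide),
  mk2 2 (-1) 1 0 (by decide),
  mk2 (-2) 1 (-1) 0 (by decide),
  mk2 (-1) 2 (-1) 1 (by decide),
  mk2 (-1) (-2) 1 1 (by decide),
  mk2 1 2 (-1) (-1) (by decide),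
  mk2 0 1 (-1) (-2) (by decide),
  mk2 (-1) (-2) 0 (-1) (by decide),
  mk2 (-1) 1 1 (-2) (by decide),
  mk2 (-1) 0 2 (-1) (by decide),
  mk2 1 0 (-2) 1 (by decide),
  mk2 1 (-1) (-1) 2 (by decide),
  mk2 (-1) (-1) (-1) (-2) (by decide),
  mk2 1 1 1 2 (by decide),
  mk2 (-2) (-1) (-1) (-1) (by decide),
  mk2 2 1 1 1 (by decide),
  mk2 2 (-3) 1 (-1) (by decide),
  mk2 (-2) 3 (-1) 1 (by decide),
  mk2 1 1 (-2) (-1) (by decide),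
  mk2 (-1) (-1) 2 1 (by decide),
  mk2 (-1) 1 2 (-3) (by decide),
  mk2 1 (-1) (-2) 3 (by decide),
  mk2 (-2) (-3) (-1) (-2) (by decide),
  mk2 2 3 1 2 (by decide),
  mk2 1 2 (-2) (-3) (by decide),
  mk2 (-1) (-2) 2 3 (by decide) ]

instance : DecidableEq (Matrix.SpecialLinearGroup (Fin 2) (ZMod 4)) :=
  fun a b => decidable_of_iff (a.1 = b.1) Subtype.ext_iff.symm

abbrev redmap : Matrix.SpecialLinearGroup (Fin 2) ℤ →* Matrix.SpecialLinearGroup (Fin 2) (ZMod 4) :=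
  Matrix.SpecialLinearGroup.map (Int.castRingHom (ZMod 4))

def K : Subgroup (Matrix.SpecialLinearGroup (Fin 2) (ZMod 4)) where
  carrier := {g | (g : Matrix (Fin 2) (Fin 2) (ZMod 4)) 0 0 = 1 ∧
    (g : Matrix (Fin 2) (Fin 2) (ZMod 4)) 1 1 = 1 ∧
    ZMod.castHom (show (2:ℕ) ∣ 4 by norm_num) (ZMod 2) ((g : Matrix (Fin 2) (Fin 2) (ZMod 4)) 0 1) = 0 ∧
    ZMod.castHom (show (2:ℕ) ∣ 4 by norm_num) (ZMod 2) ((g : Matrix (Fin 2) (Fin 2) (ZMod 4)) 1 0) = 0}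
  one_mem' := by decide
  mul_mem' := by decide
  inv_mem' := by decide

set_option maxRecDepth 100000 in
lemma redmap_surj : Function.Surjective redmap := by
  have h : ∀ y : Matrix.SpecialLinearGroup (Fin 2) (ZMod 4), ∃ m ∈ lifts, redmap m = y := by
    decide
  intro y
  obtain ⟨m, _, hm⟩ := h y
  exact ⟨m, hm⟩

lemma mem_K {g : Matrix.SpecialLinearGroup (Fin 2) (ZMod 4)} :
    g ∈ K ↔ ((g : Matrix (Fin 2) (Fin 2) (ZMod 4)) 0 0 = 1 ∧
    (g : Matrix (Fin 2) (Fin 2) (ZMod 4)) 1 1 = 1 ∧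
    ZMod.castHom (show (2:ℕ) ∣ 4 by norm_num) (ZMod 2) ((g : Matrix (Fin 2) (Fin 2) (ZMod 4)) 0 1) = 0 ∧
    ZMod.castHom (show (2:ℕ) ∣ 4 by norm_num) (ZMod 2) ((g : Matrix (Fin 2) (Fin 2) (ZMod 4)) 1 0) = 0) :=
  Iff.rfl

instance : DecidablePred (· ∈ K) := fun _ => decidable_of_iff _ mem_K.symm

lemma entry_iff4 (a : ℤ) (b : ℤ) : ((a : ZMod 4) = (b : ZMod 4)) ↔ a ≡ b [ZMOD 4] :=
  ZMod.intCast_eq_intCast_iff a b 4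

theorem stmt_2 (H : Subgroup (Matrix.SpecialLinearGroup (Fin 2) ℤ))
    (hH : ∀ g : Matrix.SpecialLinearGroup (Fin 2) ℤ,
      g ∈ H ↔
        ((g : Matrix (Fin 2) (Fin 2) ℤ) 0 0 ≡ 1 [ZMOD 4] ∧
         (g : Matrix (Fin 2) (Fin 2) ℤ) 1 1 ≡ 1 [ZMOD 4] ∧
         (g : Matrix (Fin 2) (Fin 2) ℤ) 0 1 ≡ 0 [ZMOD 2] ∧
         (g : Matrix (Fin 2) (Fin 2) ℤ) 1 0 ≡ 0 [ZMOD 2])) :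
    H.index = 12 := by
  have key : H = K.comap redmap := by
    ext g
    rw [hH, Subgroup.mem_comap, mem_K]
    have he : ∀ i j, (redmap g : Matrix (Fin 2) (Fin 2) (ZMod 4)) i j
        = (((g : Matrix (Fin 2) (Fin 2) ℤ) i j : ℤ) : ZMod 4) := fun i j => rfl
    simp only [he, map_intCast]
    rw [show ((1 : ZMod 4)) = ((1 : ℤ) : ZMod 4) by norm_num,
      show ((0 : ZMod 2)) = ((0 : ℤ) : ZMod 2) by norm_num]
    rw [ZMod.intCast_eq_intCast_iff, ZMod.intCast_eq_intCast_iff,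
      ZMod.intCast_eq_intCast_iff, ZMod.intCast_eq_intCast_iff]
    norm_cast
  rw [key, Subgroup.index_comap_of_surjective _ redmap_surj]
  have h1 := Subgroup.index_mul_card K
  have h2 : Nat.card K = 4 := by
    rw [Nat.card_eq_fintype_card]; decide
  have h3 : Nat.card (Matrix.SpecialLinearGroup (Fin 2) (ZMod 4)) = 48 := by
    rw [Nat.card_eq_fintype_card]; decide
  rw [h2, h3] at h1
  omega
end

section
/- For every prime p ≠ 2, the subgroup of SL₂(ℤ/pℤ) generated by the reductions of A = [[1,4],[0,1]] and B = [[0,1],[-1,0]] is all of SL₂(ℤ/pℤ). -/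
def A12 : Matrix.SpecialLinearGroup (Fin 2) ℤ := ⟨!![1, 4; 0, 1], by decide⟩
def B12 : Matrix.SpecialLinearGroup (Fin 2) ℤ := ⟨!![0, 1; -1, 0], by decide⟩

section aux
variable {p : ℕ} [Fact p.Prime]

def Tm (x : ZMod p) : Matrix.SpecialLinearGroup (Fin 2) (ZMod p) :=
  ⟨!![1, x; 0, 1], by simp [Matrix.det_fin_two_of]⟩

def Lm (x : ZMod p) : Matrix.SpecialLinearGroup (Fin 2) (ZMod p) :=
  ⟨!![1, 0; x, 1], by simp [Matrix.det_fin_two_of]⟩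

def Bm : Matrix.SpecialLinearGroup (Fin 2) (ZMod p) :=
  ⟨!![0, 1; -1, 0], by simp [Matrix.det_fin_two_of]⟩

lemma Tm_mul (x y : ZMod p) : Tm x * Tm y = Tm (x + y) := by
  apply Subtype.ext
  rw [Matrix.SpecialLinearGroup.coe_mul]
  simp [Tm, Matrix.SpecialLinearGroup.coe_mul, Matrix.mul_fin_two, add_comm]

lemma Tm_pow (n : ℕ) (x : ZMod p) : Tm x ^ n = Tm ((n : ZMod p) * x) := by
  induction n with
  | zero => apply Subtype.ext; rw [pow_zero, Matrix.SpecialLinearGroup.coe_one]; simp [Tm, Matrix.one_fin_two]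
  | succ k ih => rw [pow_succ, ih, Tm_mul]; push_cast; ring_nf

lemma Lm_eq (x : ZMod p) : Lm x = Bm * Tm (-x) * Bm⁻¹ := by
  rw [eq_mul_inv_iff_mul_eq]
  apply Subtype.ext
  rw [Matrix.SpecialLinearGroup.coe_mul, Matrix.SpecialLinearGroup.coe_mul]
  simp [Lm, Bm, Tm, Matrix.SpecialLinearGroup.coe_mul, Matrix.mul_fin_two]

lemma Bm_eq : Bm = Matrix.SpecialLinearGroup.map (Int.castRingHom (ZMod p)) B12 := by
  apply Subtype.ext
  ext i j
  rw [Matrix.SpecialLinearGroup.map_apply_coe]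
  fin_cases i <;> fin_cases j <;> simp [Bm, B12]

end aux

theorem stmt_12 (p : ℕ) (hp : p.Prime) (hp2 : p ≠ 2) :
    Subgroup.closure
        ({Matrix.SpecialLinearGroup.map (Int.castRingHom (ZMod p)) A12,
          Matrix.SpecialLinearGroup.map (Int.castRingHom (ZMod p)) B12} :
          Set (Matrix.SpecialLinearGroup (Fin 2) (ZMod p))) = ⊤ := by
  haveI : Fact p.Prime := ⟨hp⟩
  set H := Subgroup.closure
        ({Matrix.SpecialLinearGroup.map (Int.castRingHom (ZMod p)) A12,
          Matrix.SpecialLinearGroup.map (Int.castRingHom (ZMod p)) B12} :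
          Set (Matrix.SpecialLinearGroup (Fin 2) (ZMod p))) with hH
  have h4 : (4 : ZMod p) ≠ 0 := by
    have h2 : (2 : ZMod p) ≠ 0 := by
      intro h
      have : ((2 : ℕ) : ZMod p) = 0 := by exact_mod_cast h
      rw [ZMod.natCast_eq_zero_iff] at this
      exact hp2 ((Nat.prime_dvd_prime_iff_eq hp Nat.prime_two).mp this)
    have h42 : (4 : ZMod p) = 2 * 2 := by norm_num
    rw [h42]
    exact mul_ne_zero h2 h2
  have hA : Tm (4 : ZMod p) ∈ H := by
    have : Tm (4 : ZMod p) = Matrix.SpecialLinearGroup.map (Int.castRingHom (ZMod p)) A12 := by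
      apply Subtype.ext; ext i j; rw [Matrix.SpecialLinearGroup.map_apply_coe]; fin_cases i <;> fin_cases j <;> simp [Tm, A12]
    rw [this]
    exact Subgroup.subset_closure (by simp)
  have hB : (Bm : Matrix.SpecialLinearGroup (Fin 2) (ZMod p)) ∈ H := by
    rw [Bm_eq]; exact Subgroup.subset_closure (by simp)
  have hT : ∀ x : ZMod p, Tm x ∈ H := by
    intro x
    have key : Tm (4 : ZMod p) ^ ((4⁻¹ * x : ZMod p).val) = Tm x := by
      rw [Tm_pow]
      congr 1
      rw [ZMod.natCast_val, ZMod.cast_id]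
      field_simp
    rw [← key]
    exact pow_mem hA _
  have hL : ∀ x : ZMod p, Lm x ∈ H := by
    intro x
    rw [Lm_eq]
    exact mul_mem (mul_mem hB (hT _)) (inv_mem hB)
  have main : ∀ (a b c d : ZMod p) (hdet : a * d - b * c = 1) (hc : c ≠ 0),
      (⟨!![a, b; c, d], by rwa [Matrix.det_fin_two_of]⟩ :
        Matrix.SpecialLinearGroup (Fin 2) (ZMod p)) ∈ H := by
    intro a b c d hdet hc
    have heq : (⟨!![a, b; c, d], by rwa [Matrix.det_fin_two_of]⟩ :
        Matrix.SpecialLinearGroup (Fin 2) (ZMod p)) =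
        Tm ((a - 1) / c) * Lm c * Tm ((d - 1) / c) := by
      apply Subtype.ext
      show !![a,b;c,d] = !![1,(a-1)/c;0,1] * !![1,0;c,1] * !![1,(d-1)/c;0,1]
      rw [Matrix.mul_fin_two, Matrix.mul_fin_two]
      ext i j
      fin_cases i <;> fin_cases j <;> simp <;> field_simp
      · ring
      · linear_combination (-1 : ZMod p) * hdet
      · ring
    rw [heq]
    exact mul_mem (mul_mem (hT _) (hL _)) (hT _)
  rw [eq_top_iff]
  intro g _
  induction g using Matrix.SpecialLinearGroup.fin_two_induction with
  | _ a b c d hdet =>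
    by_cases hc : c = 0
    · subst hc
      have had : a * d = 1 := by linear_combination hdet
      have hd : d ≠ 0 := fun h => by rw [h, mul_zero] at had; exact zero_ne_one had
      have h2 : ∀ x : Matrix.SpecialLinearGroup (Fin 2) (ZMod p), x * Bm ∈ H → x ∈ H := by
        intro x hx
        have := mul_mem hx (inv_mem hB)
        rwa [mul_assoc, mul_inv_cancel, mul_one] at this
      apply h2
      have hdet2 : (-b) * 0 - a * (-d) = 1 := by linear_combination hdet
      have hmem := main (-b) a (-d) 0 hdet2 (neg_ne_zero.mpr hd)
      refine (congrArg (· ∈ H) ?_).mpr hmem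
      apply Subtype.ext
      show !![a,b;0,d] * !![0,1;-1,0] = !![-b,a;-d,0]
      rw [Matrix.mul_fin_two]
      ring_nf
    · exact main a b c d hdet hc
end

section
/- The subgroup of SL₂(ℤ) generated by A = [[1,2],[0,1]] and B = [[1,0],[2,1]] is a free group of rank 2. -/
def A14 : Matrix.SpecialLinearGroup (Fin 2) ℤ := ⟨!![1, 2; 0, 1], by decide⟩
def B14 : Matrix.SpecialLinearGroup (Fin 2) ℤ := ⟨!![1, 0; 2, 1], by decide⟩

namespace Sanov14

abbrev SL2 := Matrix.SpecialLinearGroup (Fin 2) ℤ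

def g : Fin 2 → SL2 := ![A14, B14]

/-- concrete matrix of a letter -/
def matL (l : Fin 2 × Bool) : Matrix (Fin 2) (Fin 2) ℤ :=
  if l.1 = 0 then (if l.2 then !![1,2;0,1] else !![1,-2;0,1])
  else (if l.2 then !![1,0;2,1] else !![1,0;-2,1])

lemma coe_cond (l : Fin 2 × Bool) :
    ((cond l.2 (g l.1) (g l.1)⁻¹ : SL2) : Matrix (Fin 2) (Fin 2) ℤ) = matL l := by
  rcases l with ⟨i, b⟩
  fin_cases i <;> cases b <;>
    simp [g, matL, Matrix.SpecialLinearGroup.coe_inv,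
      Matrix.adjugate_fin_two] <;> simp [A14, B14, Matrix.adjugate_fin_two]

/-- step of the ping-pong dynamics on ℤ² -/
def s (l : Fin 2 × Bool) (p : ℤ × ℤ) : ℤ × ℤ :=
  if l.1 = 0 then (p.1 + 2 * (cond l.2 1 (-1)) * p.2, p.2)
  else (p.1, p.2 + 2 * (cond l.2 1 (-1)) * p.1)

/-- ping-pong invariant -/
def Inv (l : Fin 2 × Bool) (p : ℤ × ℤ) : Prop :=
  if l.1 = 0 then p.2 ^ 2 < p.1 ^ 2 ∧ (p.2 = 0 ∨ 0 < (cond l.2 1 (-1)) * p.1 * p.2)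
  else p.1 ^ 2 < p.2 ^ 2 ∧ (p.1 = 0 ∨ 0 < (cond l.2 1 (-1)) * p.1 * p.2)

lemma mulVec_matL (l : Fin 2 × Bool) (p : ℤ × ℤ) :
    (matL l).mulVec ![p.1, p.2] = ![(s l p).1, (s l p).2] := by
  rcases l with ⟨i, b⟩
  fin_cases i <;> cases b <;>
    · funext j
      fin_cases j <;>
        simp [matL, s, Matrix.mulVec, dotProduct, Fin.sum_univ_two] <;> ring

lemma step_lemma (l l' : Fin 2 × Bool) (p : ℤ × ℤ) (h : Inv l' p)
    (hr : l.1 = l'.1 → l.2 = l'.2) : Inv l (s l p) := by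
  obtain ⟨x, y⟩ := p
  rcases l with ⟨i, b⟩; rcases l' with ⟨i', b'⟩
  fin_cases i <;> fin_cases i' <;> cases b <;> cases b' <;>
    norm_num [Inv, s] at h ⊢ <;>
    first
    | exact absurd (hr rfl) (by decide)
    | (obtain ⟨h1, h2 | h2⟩ := h
       · first
         | (subst h2; constructor
            · nlinarith
            · left; ring)
         | simp_all
       · exact ⟨by nlinarith, Or.inr (by nlinarith)⟩)
    | (obtain ⟨h1, -⟩ := h
       exact ⟨by nlinarith [sq_nonneg (x + y), sq_nonneg (x - y)],
        Or.inr (by nlinarith [sq_nonneg (x + y), sq_nonneg (x - y), sq_nonneg x,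
          sq_nonneg y])⟩)

def R (a b : Fin 2 × Bool) : Prop := a.1 = b.1 → a.2 = b.2

instance : DecidableRel R := fun a b => by unfold R; infer_instance

lemma inv_run : ∀ (L : List (Fin 2 × Bool)) (l : Fin 2 × Bool),
    List.Chain' R (l :: L) → ∀ v : ℤ × ℤ, (v = (1, 0) ∨ v = (0, 1)) →
    Inv l (List.foldr s v (l :: L)) := by
  intro L
  induction L with
  | nil =>
    intro l _ v hv
    rcases l with ⟨i, b⟩
    fin_cases i <;> cases b <;> rcases hv with rfl | rfl <;>
      simp [Inv, s] <;> norm_num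
  | cons l' L ih =>
    intro l hc v hv
    replace hc := List.isChain_cons_cons.mp hc
    have h := ih l' hc.2 v hv
    exact step_lemma l l' _ h hc.1

lemma prod_mulVec : ∀ (L : List (Fin 2 × Bool)) (v : ℤ × ℤ),
    ((L.map matL).prod).mulVec ![v.1, v.2] =
      ![(List.foldr s v L).1, (List.foldr s v L).2] := by
  intro L
  induction L with
  | nil => intro v; simp
  | cons l L ih =>
    intro v
    simp only [List.map_cons, List.prod_cons, List.foldr_cons]
    rw [← Matrix.mulVec_mulVec, ih v, mulVec_matL]

lemma coe_prod : ∀ L : List (Fin 2 × Bool),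
    (((L.map fun x => cond x.2 (g x.1) (g x.1)⁻¹).prod : SL2) : Matrix (Fin 2) (Fin 2) ℤ)
      = (L.map matL).prod := by
  intro L
  induction L with
  | nil => simp
  | cons l L ih =>
    simp only [List.map_cons, List.prod_cons, Matrix.SpecialLinearGroup.coe_mul, ih,
      coe_cond]

lemma chain'_of (L : List (Fin 2 × Bool))
    (H : ∀ (L₂ : List (Fin 2 × Bool)) (x : Fin 2) (b : Bool) (L₃ : List (Fin 2 × Bool)),
      L = L₂ ++ (x, b) :: (x, !b) :: L₃ → False) : L.Chain' R := by
  induction L with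
  | nil => exact List.IsChain.nil
  | cons a t ih =>
    cases t with
    | nil => exact List.IsChain.singleton _
    | cons c t' =>
      refine List.isChain_cons_cons.mpr ⟨?_, ih ?_⟩
      · intro h1
        by_contra h2
        obtain ⟨a1, a2⟩ := a
        obtain ⟨c1, c2⟩ := c
        simp only at h1 h2
        have hc2 : c2 = !a2 := by cases a2 <;> cases c2 <;> simp_all
        exact H [] a1 a2 t' (by rw [h1, hc2]; rfl)
      · intro L₂ x b L₃ hEq
        exact H (a :: L₂) x b L₃ (by simp [hEq])

lemma chain'_toWord (w : FreeGroup (Fin 2)) : w.toWord.Chain' R := by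
  apply chain'_of
  intro L₂ x b L₃ hEq
  exact FreeGroup.reduce.not (L₁ := w.toWord) (by rw [FreeGroup.reduce_toWord]; exact hEq)

lemma lift_injective : Function.Injective (FreeGroup.lift g) := by
  rw [injective_iff_map_eq_one]
  intro w hw
  by_contra hne
  have hL : w.toWord ≠ [] := fun h => hne (FreeGroup.toWord_eq_nil_iff.mp h)
  obtain ⟨l, L, hLL⟩ := List.exists_cons_of_ne_nil hL
  have hchain : List.Chain' R (l :: L) := hLL ▸ chain'_toWord w
  have hprod : ((((l :: L).map fun x => cond x.2 (g x.1) (g x.1)⁻¹).prod : SL2)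
      : Matrix (Fin 2) (Fin 2) ℤ) = 1 := by
    have : FreeGroup.lift g (FreeGroup.mk (l :: L)) = 1 := by
      rw [← hLL, FreeGroup.mk_toWord]; exact hw
    rw [FreeGroup.lift_mk] at this
    rw [this]; rfl
  rw [coe_prod] at hprod
  have key : ∀ v : ℤ × ℤ, (v = (1, 0) ∨ v = (0, 1)) →
      (![(List.foldr s v (l :: L)).1, (List.foldr s v (l :: L)).2] : Fin 2 → ℤ)
        = ![v.1, v.2] := by
    intro v hv
    rw [← prod_mulVec, hprod, Matrix.one_mulVec]
  have h1 := inv_run L l hchain (1, 0) (Or.inl rfl)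
  have h2 := inv_run L l hchain (0, 1) (Or.inr rfl)
  have k1 := key (1, 0) (Or.inl rfl)
  have k2 := key (0, 1) (Or.inr rfl)
  have e1a : (List.foldr s ((1:ℤ), (0:ℤ)) (l :: L)).1 = 1 := congrFun k1 0
  have e1b : (List.foldr s ((1:ℤ), (0:ℤ)) (l :: L)).2 = 0 := congrFun k1 1
  have e2a : (List.foldr s ((0:ℤ), (1:ℤ)) (l :: L)).1 = 0 := congrFun k2 0
  have e2b : (List.foldr s ((0:ℤ), (1:ℤ)) (l :: L)).2 = 1 := congrFun k2 1
  rcases l with ⟨i, b⟩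
  fin_cases i <;> simp only [Inv] at h1 h2 <;> simp_all <;> omega

lemma range_g : Set.range g = {A14, B14} := by
  ext x
  constructor
  · rintro ⟨i, rfl⟩
    fin_cases i <;> simp [g]
  · rintro (rfl | rfl)
    exacts [⟨0, rfl⟩, ⟨1, rfl⟩]

end Sanov14

theorem stmt_14 :
    Nonempty
      ((Subgroup.closure ({A14, B14} : Set (Matrix.SpecialLinearGroup (Fin 2) ℤ))) ≃*
        FreeGroup (Fin 2)) := by
  have hrange : (FreeGroup.lift Sanov14.g).range = Subgroup.closure {A14, B14} := by
    rw [FreeGroup.range_lift_eq_closure, Sanov14.range_g]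
  exact ⟨((MonoidHom.ofInjective Sanov14.lift_injective).trans
    (MulEquiv.subgroupCongr hrange)).symm⟩
end

section
/- Any subgroup of SL₂(ℤ) that is not virtually abelian contains two elements which generate a non-abelian free subgroup (in particular it contains a free group of rank 2). -/
open Matrix Subgroup Pointwise

namespace Stmt19Aux


abbrev G := Matrix.SpecialLinearGroup (Fin 2) ℤ

lemma left_mul_upper (t : ℤ) (M : Matrix (Fin 2) (Fin 2) ℤ) :
    !![1, t; 0, 1] * M =
      !![M 0 0 + t * M 1 0, M 0 1 + t * M 1 1; M 1 0, M 1 1] := by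
  ext i j
  fin_cases i <;> fin_cases j <;>
    simp [Matrix.mul_apply, Fin.sum_univ_two] <;> ring

lemma left_mul_lower (t : ℤ) (M : Matrix (Fin 2) (Fin 2) ℤ) :
    !![1, 0; t, 1] * M =
      !![M 0 0, M 0 1; M 1 0 + t * M 0 0, M 1 1 + t * M 0 1] := by
  ext i j
  fin_cases i <;> fin_cases j <;>
    simp [Matrix.mul_apply, Fin.sum_univ_two] <;> ring

def A : G := ⟨!![1, 2; 0, 1], by norm_num [Matrix.det_fin_two_of]⟩
def B : G := ⟨!![1, 0; 2, 1], by norm_num [Matrix.det_fin_two_of]⟩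
def N : G := ⟨!![-1, 0; 0, -1], by norm_num [Matrix.det_fin_two_of]⟩

lemma coe_N : (N : Matrix (Fin 2) (Fin 2) ℤ) = -1 := by
  ext i j
  fin_cases i <;> fin_cases j <;> simp [N]

lemma N_mul_N : N * N = 1 := by
  apply Subtype.ext
  rw [Matrix.SpecialLinearGroup.coe_mul, coe_N]
  simp

lemma N_comm (g : G) : N * g = g * N := by
  apply Subtype.ext
  rw [Matrix.SpecialLinearGroup.coe_mul, Matrix.SpecialLinearGroup.coe_mul, coe_N]
  simp

lemma N_inv : N⁻¹ = N := by
  rw [inv_eq_iff_mul_eq_one, N_mul_N]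

lemma A_inv : A⁻¹ = ⟨!![1, -2; 0, 1], by norm_num [Matrix.det_fin_two_of]⟩ := by
  refine inv_eq_iff_mul_eq_one.mpr ?_
  apply Subtype.ext
  show (!![1, 2; 0, 1] : Matrix (Fin 2) (Fin 2) ℤ) * !![1, -2; 0, 1] = 1
  ext i j
  fin_cases i <;> fin_cases j <;> simp [Matrix.mul_apply, Fin.sum_univ_two]

lemma B_inv : B⁻¹ = ⟨!![1, 0; -2, 1], by norm_num [Matrix.det_fin_two_of]⟩ := by
  refine inv_eq_iff_mul_eq_one.mpr ?_
  apply Subtype.ext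
  show (!![1, 0; 2, 1] : Matrix (Fin 2) (Fin 2) ℤ) * !![1, 0; -2, 1] = 1
  ext i j
  fin_cases i <;> fin_cases j <;> simp [Matrix.mul_apply, Fin.sum_univ_two]

lemma coe_A_zpow (k : ℤ) : ((A ^ k : G) : Matrix (Fin 2) (Fin 2) ℤ) = !![1, 2 * k; 0, 1] := by
  induction k using Int.induction_on with
  | zero =>
    show (1 : Matrix (Fin 2) (Fin 2) ℤ) = _
    ext i j; fin_cases i <;> fin_cases j <;> simp
  | succ n ih =>
    rw [_root_.zpow_add_one, Matrix.SpecialLinearGroup.coe_mul, ih]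
    show _ * (!![1, 2; 0, 1] : Matrix (Fin 2) (Fin 2) ℤ) = _
    ext i j; fin_cases i <;> fin_cases j <;>
      simp [Matrix.mul_apply, Fin.sum_univ_two] <;> ring
  | pred n ih =>
    rw [show (-(n:ℤ) - 1) = (-(n:ℤ)) - 1 from rfl, _root_.zpow_sub_one,
      Matrix.SpecialLinearGroup.coe_mul, ih, A_inv]
    show _ * (!![1, -2; 0, 1] : Matrix (Fin 2) (Fin 2) ℤ) = _
    ext i j; fin_cases i <;> fin_cases j <;>
      simp [Matrix.mul_apply, Fin.sum_univ_two] <;> ring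

lemma coe_B_zpow (k : ℤ) : ((B ^ k : G) : Matrix (Fin 2) (Fin 2) ℤ) = !![1, 0; 2 * k, 1] := by
  induction k using Int.induction_on with
  | zero =>
    show (1 : Matrix (Fin 2) (Fin 2) ℤ) = _
    ext i j; fin_cases i <;> fin_cases j <;> simp
  | succ n ih =>
    rw [_root_.zpow_add_one, Matrix.SpecialLinearGroup.coe_mul, ih]
    show _ * (!![1, 0; 2, 1] : Matrix (Fin 2) (Fin 2) ℤ) = _
    ext i j; fin_cases i <;> fin_cases j <;>
      simp [Matrix.mul_apply, Fin.sum_univ_two] <;> ring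
  | pred n ih =>
    rw [show (-(n:ℤ) - 1) = (-(n:ℤ)) - 1 from rfl, _root_.zpow_sub_one,
      Matrix.SpecialLinearGroup.coe_mul, ih, B_inv]
    show _ * (!![1, 0; -2, 1] : Matrix (Fin 2) (Fin 2) ℤ) = _
    ext i j; fin_cases i <;> fin_cases j <;>
      simp [Matrix.mul_apply, Fin.sum_univ_two] <;> ring


def V := {v : Fin 2 → ℤ // v ≠ 0}

instance : MulAction G V where
  smul g v := ⟨(g : Matrix (Fin 2) (Fin 2) ℤ).mulVec v.1, by
    intro h
    apply v.2
    have := congrArg ((g⁻¹ : G) : Matrix (Fin 2) (Fin 2) ℤ).mulVec h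
    rwa [Matrix.mulVec_mulVec, ← Matrix.SpecialLinearGroup.coe_mul, inv_mul_cancel,
      Matrix.SpecialLinearGroup.coe_one, Matrix.one_mulVec, Matrix.mulVec_zero] at this⟩
  one_smul v := Subtype.ext (by
    show ((1 : G) : Matrix (Fin 2) (Fin 2) ℤ).mulVec v.1 = v.1
    rw [Matrix.SpecialLinearGroup.coe_one, Matrix.one_mulVec])
  mul_smul g h v := Subtype.ext (by
    show ((g * h : G) : Matrix (Fin 2) (Fin 2) ℤ).mulVec v.1 = _
    rw [Matrix.SpecialLinearGroup.coe_mul, ← Matrix.mulVec_mulVec]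
    rfl)

lemma smul_coe (g : G) (v : V) : (g • v).1 = (g : Matrix (Fin 2) (Fin 2) ℤ).mulVec v.1 := rfl

lemma mulVec_two (a b c d : ℤ) (v : Fin 2 → ℤ) :
    (!![a, b; c, d]).mulVec v = ![a * v 0 + b * v 1, c * v 0 + d * v 1] := by
  funext i
  fin_cases i <;> simp [Matrix.mulVec, dotProduct, Fin.sum_univ_two]

-- ping-pong sets, indexed by slopes
def XA : Set V := {v | (0 < v.1 1 ∧ v.1 1 ≤ v.1 0) ∨ (v.1 1 < 0 ∧ v.1 0 ≤ v.1 1) ∨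
  (v.1 1 = 0 ∧ v.1 0 ≠ 0)}
def YA : Set V := {v | (0 < v.1 1 ∧ v.1 0 < -v.1 1) ∨ (v.1 1 < 0 ∧ -v.1 1 < v.1 0)}
def XB : Set V := {v | (0 < v.1 0 ∧ v.1 0 < v.1 1) ∨ (v.1 0 < 0 ∧ v.1 1 < v.1 0) ∨
  (v.1 0 = 0 ∧ v.1 1 ≠ 0)}
def YB : Set V := {v | (0 < v.1 0 ∧ v.1 1 ≤ -v.1 0) ∨ (v.1 0 < 0 ∧ -v.1 0 ≤ v.1 1)}

def Ai : G := ⟨!![1, -2; 0, 1], by norm_num [Matrix.det_fin_two_of]⟩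
def Bi : G := ⟨!![1, 0; -2, 1], by norm_num [Matrix.det_fin_two_of]⟩

lemma nz (v : V) : v.1 0 ≠ 0 ∨ v.1 1 ≠ 0 := by
  by_contra h; push_neg at h
  exact v.2 (funext fun i => by fin_cases i <;> simp [h.1, h.2])

lemma smul_apply (g : G) (v : V) (i : Fin 2) :
    (g • v).1 i = g.1 i 0 * v.1 0 + g.1 i 1 * v.1 1 := by
  rw [smul_coe]
  simp [Matrix.mulVec, dotProduct, Fin.sum_univ_two]

theorem lift_injective : Function.Injective (FreeGroup.lift (![A, B] : Fin 2 → G)) := by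
  have hA : ∀ v : V, (A • v).1 0 = v.1 0 + 2 * v.1 1 ∧ (A • v).1 1 = v.1 1 := by
    intro v
    constructor <;> · rw [smul_apply]; simp [A]; try ring
  have hB : ∀ v : V, (B • v).1 0 = v.1 0 ∧ (B • v).1 1 = v.1 1 + 2 * v.1 0 := by
    intro v
    constructor <;> · rw [smul_apply]; simp [B]; try ring
  have hAi : ∀ v : V, (Ai • v).1 0 = v.1 0 - 2 * v.1 1 ∧ (Ai • v).1 1 = v.1 1 := by
    intro v
    constructor <;> · rw [smul_apply]; simp [Ai]; try ring
  have hBi : ∀ v : V, (Bi • v).1 0 = v.1 0 ∧ (Bi • v).1 1 = v.1 1 - 2 * v.1 0 := by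
    intro v
    constructor <;> · rw [smul_apply]; simp [Bi]; try ring
  have hAinv : A⁻¹ = Ai := by
    rw [inv_eq_iff_mul_eq_one]; apply Subtype.ext
    rw [Matrix.SpecialLinearGroup.coe_mul]
    show (!![1, 2; 0, 1] : Matrix (Fin 2) (Fin 2) ℤ) * !![1, -2; 0, 1] = 1
    ext i j; fin_cases i <;> fin_cases j <;> simp [Matrix.mul_apply, Fin.sum_univ_two]
  have hBinv : B⁻¹ = Bi := by
    rw [inv_eq_iff_mul_eq_one]; apply Subtype.ext
    rw [Matrix.SpecialLinearGroup.coe_mul]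
    show (!![1, 0; 2, 1] : Matrix (Fin 2) (Fin 2) ℤ) * !![1, 0; -2, 1] = 1
    ext i j; fin_cases i <;> fin_cases j <;> simp [Matrix.mul_apply, Fin.sum_univ_two]
  apply FreeGroup.injective_lift_of_ping_pong (X := ![XA, XB]) (Y := ![YA, YB])
  · intro i
    fin_cases i
    · show XA.Nonempty
      exact ⟨⟨![1, 0], by intro h; simpa using congrFun h 0⟩, by
        right; right; constructor <;> norm_num⟩
    · show XB.Nonempty
      exact ⟨⟨![0, 1], by intro h; simpa using congrFun h 1⟩, by
        right; right; constructor <;> norm_num⟩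
  · intro i j hij
    fin_cases i <;> fin_cases j
    · exact absurd rfl hij
    · show Disjoint XA XB
      rw [Set.disjoint_left]
      rintro v hv1 hv2
      simp only [XA, XB, Set.mem_setOf_eq] at hv1 hv2
      omega
    · show Disjoint XB XA
      rw [Set.disjoint_left]
      rintro v hv1 hv2
      simp only [XA, XB, Set.mem_setOf_eq] at hv1 hv2
      omega
    · exact absurd rfl hij
  · intro i j hij
    fin_cases i <;> fin_cases j
    · exact absurd rfl hij
    · show Disjoint YA YB
      rw [Set.disjoint_left]
      rintro v hv1 hv2
      simp only [YA, YB, Set.mem_setOf_eq] at hv1 hv2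
      omega
    · show Disjoint YB YA
      rw [Set.disjoint_left]
      rintro v hv1 hv2
      simp only [YA, YB, Set.mem_setOf_eq] at hv1 hv2
      omega
    · exact absurd rfl hij
  · intro i j
    fin_cases i <;> fin_cases j
    · show Disjoint XA YA
      rw [Set.disjoint_left]
      rintro v hv1 hv2
      simp only [XA, YA, Set.mem_setOf_eq] at hv1 hv2
      omega
    · show Disjoint XA YB
      rw [Set.disjoint_left]
      rintro v hv1 hv2
      simp only [XA, YB, Set.mem_setOf_eq] at hv1 hv2
      omega
    · show Disjoint XB YA
      rw [Set.disjoint_left]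
      rintro v hv1 hv2
      simp only [XB, YA, Set.mem_setOf_eq] at hv1 hv2
      omega
    · show Disjoint XB YB
      rw [Set.disjoint_left]
      rintro v hv1 hv2
      simp only [XB, YB, Set.mem_setOf_eq] at hv1 hv2
      omega
  · intro i
    fin_cases i
    · show A • YAᶜ ⊆ XA
      rintro x ⟨v, hv, rfl⟩
      simp only [Set.mem_compl_iff, YA, Set.mem_setOf_eq] at hv
      have h := hA v
      have hnz := nz v
      simp only [XA, Set.mem_setOf_eq, h.1, h.2]
      omega
    · show B • YBᶜ ⊆ XB
      rintro x ⟨v, hv, rfl⟩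
      simp only [Set.mem_compl_iff, YB, Set.mem_setOf_eq] at hv
      have h := hB v
      have hnz := nz v
      simp only [XB, Set.mem_setOf_eq, h.1, h.2]
      omega
  · intro i
    fin_cases i
    · show A⁻¹ • XAᶜ ⊆ YA
      rw [hAinv]
      rintro x ⟨v, hv, rfl⟩
      simp only [Set.mem_compl_iff, XA, Set.mem_setOf_eq] at hv
      have h := hAi v
      have hnz := nz v
      simp only [YA, Set.mem_setOf_eq, h.1, h.2]
      omega
    · show B⁻¹ • XBᶜ ⊆ YB
      rw [hBinv]
      rintro x ⟨v, hv, rfl⟩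
      simp only [Set.mem_compl_iff, XB, Set.mem_setOf_eq] at hv
      have h := hBi v
      have hnz := nz v
      simp only [YB, Set.mem_setOf_eq, h.1, h.2]
      omega


lemma exists_k (x y : ℤ) (hy : y ≠ 0) (hpar : x % 2 ≠ y % 2) :
    ∃ k : ℤ, |x + 2 * k * y| < |y| := by
  have hb : (0:ℤ) < 2 * |y| := by positivity
  have hbne : (2 * |y| : ℤ) ≠ 0 := ne_of_gt hb
  set q := x / (2 * |y|) with hq
  set r := x % (2 * |y|) with hr
  have h1 : 0 ≤ r := Int.emod_nonneg x hbne
  have h2 : r < 2 * |y| := Int.emod_lt_of_pos x hb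
  have h3 : r % 2 = x % 2 := Int.emod_emod_of_dvd x ⟨|y|, rfl⟩
  have h4 : 2 * |y| * q + r = x := Int.mul_ediv_add_emod x (2 * |y|)
  have hry : r ≠ |y| := by
    intro h
    rcases abs_cases y with ⟨h5, _⟩ | ⟨h5, _⟩ <;> omega
  rcases abs_cases y with ⟨h5, hy5⟩ | ⟨h5, hy5⟩
  · rcases lt_or_ge r |y| with h6 | h6
    · refine ⟨-q, ?_⟩
      have key : x + 2 * -q * y = r := by linear_combination -1 * h4 + 2*q*h5
      rw [key, abs_of_nonneg h1]; exact h6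
    · refine ⟨-q - 1, ?_⟩
      have key : x + 2 * (-q - 1) * y = r - 2 * y := by linear_combination -1 * h4 + 2*q*h5
      rw [key, abs_of_nonpos (by linarith : r - 2 * y ≤ 0)]
      have : r > |y| := lt_of_le_of_ne h6 (Ne.symm hry)
      linarith
  · rcases lt_or_ge r |y| with h6 | h6
    · refine ⟨q, ?_⟩
      have key : x + 2 * q * y = r := by linear_combination -1 * h4 + 2*q*h5
      rw [key, abs_of_nonneg h1]; exact h6
    · refine ⟨q + 1, ?_⟩
      have key : x + 2 * (q + 1) * y = r + 2 * y := by linear_combination -1 * h4 + 2*q*h5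
      rw [key, abs_of_nonpos (by linarith : r + 2 * y ≤ 0)]
      have : r > |y| := lt_of_le_of_ne h6 (Ne.symm hry)
      linarith

def F' : Subgroup G := Subgroup.closure {A, B, N}

@[simp] lemma e00 (w x y z : ℤ) : (!![w,x;y,z] : Matrix (Fin 2) (Fin 2) ℤ) 0 0 = w := by simp
@[simp] lemma e01 (w x y z : ℤ) : (!![w,x;y,z] : Matrix (Fin 2) (Fin 2) ℤ) 0 1 = x := by simp
@[simp] lemma e10 (w x y z : ℤ) : (!![w,x;y,z] : Matrix (Fin 2) (Fin 2) ℤ) 1 0 = y := by simp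
@[simp] lemma e11 (w x y z : ℤ) : (!![w,x;y,z] : Matrix (Fin 2) (Fin 2) ℤ) 1 1 = z := by simp

lemma det_entries (M : G) : M.1 0 0 * M.1 1 1 - M.1 0 1 * M.1 1 0 = 1 := by
  have := M.2
  rwa [Matrix.det_fin_two] at this

lemma coe_Azk_mul (k : ℤ) (M : G) :
    ((A ^ k * M : G) : Matrix (Fin 2) (Fin 2) ℤ) =
      !![M.1 0 0 + 2 * k * M.1 1 0, M.1 0 1 + 2 * k * M.1 1 1; M.1 1 0, M.1 1 1] := by
  rw [Matrix.SpecialLinearGroup.coe_mul, coe_A_zpow, left_mul_upper]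

lemma coe_Bzk_mul (k : ℤ) (M : G) :
    ((B ^ k * M : G) : Matrix (Fin 2) (Fin 2) ℤ) =
      !![M.1 0 0, M.1 0 1; M.1 1 0 + 2 * k * M.1 0 0, M.1 1 1 + 2 * k * M.1 0 1] := by
  rw [Matrix.SpecialLinearGroup.coe_mul, coe_B_zpow, left_mul_lower]

lemma cancel_mem (g : G) (hg : g ∈ F') (M : G) (h : g * M ∈ F') : M ∈ F' := by
  have := F'.mul_mem (F'.inv_mem hg) h
  rwa [← mul_assoc, inv_mul_cancel, one_mul] at this

lemma A_mem : A ∈ F' := Subgroup.subset_closure (by simp)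
lemma B_mem : B ∈ F' := Subgroup.subset_closure (by simp)
lemma N_mem : N ∈ F' := Subgroup.subset_closure (by simp)

lemma step1 : ∀ n : ℕ, ∀ M : G, (M.1 0 1).natAbs ≤ n → M.1 1 0 = 0 → 2 ∣ M.1 0 1 → M ∈ F' := by
  intro n
  induction n using Nat.strong_induction_on with
  | _ n ih =>
    intro M hb hc hbdvd
    have hdet := det_entries M
    rw [hc] at hdet
    have had : M.1 0 0 * M.1 1 1 = 1 := by linarith
    have hcase : (M.1 0 0 = 1 ∧ M.1 1 1 = 1) ∨ (M.1 0 0 = -1 ∧ M.1 1 1 = -1) :=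
      Int.mul_eq_one_iff_eq_one_or_neg_one.mp had |>.imp
        (fun h => ⟨h.1, h.2⟩) (fun h => ⟨h.1, h.2⟩)
    by_cases hb0 : M.1 0 1 = 0
    · rcases hcase with ⟨h1, h2⟩ | ⟨h1, h2⟩
      · have : M = 1 := by
          apply Subtype.ext
          ext i j
          fin_cases i <;> fin_cases j <;> simp [h1, h2, hb0, hc]
        rw [this]; exact F'.one_mem
      · have : M = N := by
          apply Subtype.ext
          ext i j
          fin_cases i <;> fin_cases j <;> simp [N, h1, h2, hb0, hc]
        rw [this]; exact N_mem
    · -- reduce |b| by multiplying by A^k, k = ±1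
      have hd : M.1 1 1 = 1 ∨ M.1 1 1 = -1 := by rcases hcase with ⟨_, h⟩ | ⟨_, h⟩ <;> omega
      obtain ⟨k, hk1, hk2⟩ : ∃ k : ℤ, (M.1 0 1 + 2 * k * M.1 1 1).natAbs + 2 = (M.1 0 1).natAbs
          ∧ (2 : ℤ) ∣ (M.1 0 1 + 2 * k * M.1 1 1) := by
        rcases hd with h | h
        · rcases lt_or_gt_of_ne hb0 with hbneg | hbpos
          · exact ⟨1, by rw [h]; omega, by rw [h]; omega⟩
          · exact ⟨-1, by rw [h]; omega, by rw [h]; omega⟩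
        · rcases lt_or_gt_of_ne hb0 with hbneg | hbpos
          · exact ⟨-1, by rw [h]; omega, by rw [h]; omega⟩
          · exact ⟨1, by rw [h]; omega, by rw [h]; omega⟩
      apply cancel_mem (A ^ k) (F'.zpow_mem A_mem k)
      have hM' := coe_Azk_mul k M
      apply ih ((M.1 0 1).natAbs - 1) (by omega)
      · rw [hM', e01]; omega
      · rw [hM', e10]; exact hc
      · rw [hM', e01]; exact hk2

lemma step2 : ∀ n : ℕ, ∀ M : G, (M.1 0 0).natAbs + (M.1 1 0).natAbs ≤ n →
    2 ∣ M.1 0 1 → 2 ∣ M.1 1 0 → M ∈ F' := by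
  intro n
  induction n using Nat.strong_induction_on with
  | _ n ih =>
    intro M hsum hb hc
    have hdet := det_entries M
    have ha_odd : ¬ (2 ∣ M.1 0 0) := by
      intro ha
      have : (2:ℤ) ∣ 1 := by
        rw [← hdet]
        exact dvd_sub (ha.mul_right _) (hb.mul_right _)
      norm_num at this
    by_cases hc0 : M.1 1 0 = 0
    · exact step1 (M.1 0 1).natAbs M le_rfl hc0 hb
    · have ha0 : M.1 0 0 ≠ 0 := fun h => ha_odd (h ▸ dvd_zero 2)
      rcases lt_or_gt_of_ne (fun h : (M.1 0 0).natAbs = (M.1 1 0).natAbs => by omega)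
        with hlt | hgt
      · -- |a| < |c| : reduce c with B^k
        obtain ⟨k, hk⟩ := exists_k (M.1 1 0) (M.1 0 0) ha0 (by omega)
        apply cancel_mem (B ^ k) (F'.zpow_mem B_mem k)
        have hM' := coe_Bzk_mul k M
        apply ih ((M.1 0 0).natAbs + (M.1 1 0).natAbs - 1) (by omega)
        · rw [hM', e00, e10]
          rw [Int.abs_eq_natAbs, Int.abs_eq_natAbs] at hk
          omega
        · rw [hM', e01]; exact hb
        · rw [hM', e10]; exact dvd_add hc ⟨k * M.1 0 0, by ring⟩
      · -- |a| > |c| : reduce a with A^k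
        obtain ⟨k, hk⟩ := exists_k (M.1 0 0) (M.1 1 0) hc0 (by omega)
        apply cancel_mem (A ^ k) (F'.zpow_mem A_mem k)
        have hM' := coe_Azk_mul k M
        apply ih ((M.1 0 0).natAbs + (M.1 1 0).natAbs - 1) (by omega)
        · rw [hM', e00, e10]
          rw [Int.abs_eq_natAbs, Int.abs_eq_natAbs] at hk
          omega
        · rw [hM', e01]; exact dvd_add hb ⟨k * M.1 1 1, by ring⟩
        · rw [hM', e10]; exact hc


def F : Subgroup G := Subgroup.closure {A, B}

lemma F_le_F' : F ≤ F' := Subgroup.closure_mono (by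
  intro x hx
  rcases hx with h | h
  · exact Or.inl h
  · exact Or.inr (Or.inl h))

lemma mem_or_N_mem : ∀ x ∈ F', x ∈ F ∨ N * x ∈ F := by
  intro x hx
  induction hx using Subgroup.closure_induction with
  | mem g hg =>
    rcases hg with h | h | h
    · left; exact Subgroup.subset_closure (by simp [h])
    · left; exact Subgroup.subset_closure (by simp [h])
    · right; rw [h, N_mul_N]; exact F.one_mem
  | one => left; exact F.one_mem
  | mul g h hg hh ihg ihh =>
    rcases ihg with h1 | h1 <;> rcases ihh with h2 | h2
    · left; exact F.mul_mem h1 h2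
    · right; rw [show N * (g * h) = g * (N * h) by rw [← mul_assoc, N_comm g, mul_assoc]]
      exact F.mul_mem h1 h2
    · right; rw [show N * (g * h) = (N * g) * h by rw [mul_assoc]]
      exact F.mul_mem h1 h2
    · left
      have heq : (N * g) * (N * h) = g * h := by
        calc (N * g) * (N * h) = ((N * g) * N) * h := (mul_assoc _ _ _).symm
          _ = (N * (N * g)) * h := by rw [← N_comm (N * g)]
          _ = ((N * N) * g) * h := by rw [← mul_assoc]
          _ = g * h := by rw [N_mul_N, one_mul]
      have := F.mul_mem h1 h2
      rwa [heq] at this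
  | inv g hg ihg =>
    rcases ihg with h1 | h1
    · left; exact F.inv_mem h1
    · right
      have := F.inv_mem h1
      rwa [_root_.mul_inv_rev, N_inv, ← N_comm g⁻¹] at this
  
lemma N_mem_F' : N ∈ F' := Subgroup.subset_closure (by simp)

lemma ker_le_F' : (Matrix.SpecialLinearGroup.map (Int.castRingHom (ZMod 2))).ker ≤ F' := by
  intro M hM
  rw [MonoidHom.mem_ker] at hM
  have hM' : (M.1).map (Int.castRingHom (ZMod 2)) = 1 := congrArg Subtype.val hM
  have h01 : ((M.1 0 1 : ℤ) : ZMod 2) = 0 := by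
    have := congrFun (congrFun hM' 0) 1
    simpa [Matrix.map_apply] using this
  have h10 : ((M.1 1 0 : ℤ) : ZMod 2) = 0 := by
    have := congrFun (congrFun hM' 1) 0
    simpa [Matrix.map_apply] using this
  rw [ZMod.intCast_zmod_eq_zero_iff_dvd] at h01 h10
  exact step2 _ M le_rfl (by exact_mod_cast h01) (by exact_mod_cast h10)

instance : Finite (Matrix.SpecialLinearGroup (Fin 2) (ZMod 2)) := Subtype.finite

lemma F'_finiteIndex : F'.FiniteIndex := by
  haveI : Finite ((Matrix.SpecialLinearGroup.map (n := Fin 2) (Int.castRingHom (ZMod 2))).range) :=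
    Subtype.finite
  have : ((Matrix.SpecialLinearGroup.map (n := Fin 2) (Int.castRingHom (ZMod 2))).ker).FiniteIndex :=
    Subgroup.finiteIndex_ker (Matrix.SpecialLinearGroup.map (n := Fin 2) (Int.castRingHom (ZMod 2)))
  exact Subgroup.finiteIndex_of_le ker_le_F'

lemma F_finiteIndex : F.FiniteIndex := by
  have h2 : F'.index ≠ 0 := F'_finiteIndex.index_ne_zero
  have hN : N ∈ F' := N_mem_F'
  have h1 : (F.subgroupOf F').index ≠ 0 := by
    have : Finite (F' ⧸ F.subgroupOf F') := by
      apply Finite.of_surjective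
        (fun b : Bool => if b then ((1 : F') : F' ⧸ F.subgroupOf F')
          else ((⟨N, hN⟩ : F') : F' ⧸ F.subgroupOf F'))
      rintro ⟨x⟩
      rcases mem_or_N_mem x.1 x.2 with h | h
      · refine ⟨true, ?_⟩
        simp only [if_true]
        apply (QuotientGroup.eq (s := F.subgroupOf F')).mpr
        simpa [Subgroup.mem_subgroupOf] using F.mul_mem (F.one_mem) h
      · refine ⟨false, ?_⟩
        simp only [if_false]
        apply (QuotientGroup.eq (s := F.subgroupOf F')).mpr
        have : ((⟨N, hN⟩ : F')⁻¹ * x).1 ∈ F := by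
          have hinv : (⟨N, hN⟩ : F')⁻¹ = ⟨N, hN⟩ := by
            rw [inv_eq_iff_mul_eq_one]
            exact Subtype.ext N_mul_N
          rw [hinv]
          exact h
        simpa [Subgroup.mem_subgroupOf] using this
    exact (Subgroup.finiteIndex_of_finite_quotient).index_ne_zero
  constructor
  rw [← Subgroup.relIndex_mul_index F_le_F']
  exact mul_ne_zero h1 h2

lemma range_pair {α : Type*} (a b : α) : Set.range (![a, b] : Fin 2 → α) = {a, b} := by
  ext z
  simp [Fin.exists_fin_two]
  exact or_comm

lemma range_eq_F : (FreeGroup.lift (![A, B] : Fin 2 → G)).range = F := by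
  rw [FreeGroup.range_lift_eq_closure, range_pair]
  rfl

noncomputable def eqFree : FreeGroup (Fin 2) ≃* F :=
  (MonoidHom.ofInjective lift_injective).trans (MulEquiv.subgroupCongr range_eq_F)

noncomputable instance : IsFreeGroup F := IsFreeGroup.ofMulEquiv eqFree

lemma freegroup_comm_of_subsingleton {S : Type*} (hS : ∀ x y : S, x = y)
    (g h : FreeGroup S) : g * h = h * g := by
  rcases isEmpty_or_nonempty S with hE | ⟨⟨s⟩⟩
  · have key : ∀ z : FreeGroup S, z = 1 := by
      intro z
      induction z using FreeGroup.induction_on with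
      | C1 => rfl
      | of x => exact hE.elim x
      | inv_of x _ => exact hE.elim x
      | mul x y ihx ihy => rw [ihx, ihy, one_mul]
    rw [key g, key h]
  · have key : ∀ z : FreeGroup S, ∃ n : ℤ, z = (FreeGroup.of s) ^ n := by
      intro z
      induction z using FreeGroup.induction_on with
      | C1 => exact ⟨0, by simp⟩
      | of x => exact ⟨1, by rw [hS x s]; simp⟩
      | inv_of x ih =>
        rcases ih with ⟨n, hn⟩
        exact ⟨-n, by rw [hn, ← _root_.zpow_neg]⟩
      | mul x y ihx ihy =>
        rcases ihx with ⟨n, hn⟩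
        rcases ihy with ⟨m, hm⟩
        exact ⟨n + m, by rw [hn, hm, ← _root_.zpow_add]⟩
    rcases key g with ⟨n, hn⟩
    rcases key h with ⟨m, hm⟩
    rw [hn, hm, ← _root_.zpow_add, ← _root_.zpow_add, add_comm]

lemma chi_injective {S : Type*} (x y : S) (hxy : x ≠ y) :
    Function.Injective
      (FreeGroup.lift (![FreeGroup.of x, FreeGroup.of y] : Fin 2 → FreeGroup S)) := by
  classical
  set χ := FreeGroup.lift (![FreeGroup.of x, FreeGroup.of y] : Fin 2 → FreeGroup S) with hχ
  set r : S → FreeGroup (Fin 2) :=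
    fun s => if s = x then FreeGroup.of 0 else if s = y then FreeGroup.of 1 else 1 with hr
  set ρ := FreeGroup.lift r with hρ
  have hcomp : ρ.comp χ = MonoidHom.id _ := by
    apply FreeGroup.ext_hom
    intro i
    fin_cases i
    · show ρ (χ (FreeGroup.of 0)) = FreeGroup.of 0
      rw [hχ, FreeGroup.lift_apply_of]
      show ρ (FreeGroup.of x) = _
      rw [hρ, FreeGroup.lift_apply_of, hr]
      simp
    · show ρ (χ (FreeGroup.of 1)) = FreeGroup.of 1
      rw [hχ, FreeGroup.lift_apply_of]
      show ρ (FreeGroup.of y) = _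
      rw [hρ, FreeGroup.lift_apply_of, hr]
      simp [Ne.symm hxy, hxy]
  have : Function.LeftInverse ρ χ := fun z => by
    have := DFunLike.congr_fun hcomp z
    simpa using this
  exact this.injective

theorem stmt_19 (H : Subgroup G)
    (hH : ¬ ∃ K : Subgroup G,
        K ≤ H ∧ (∀ a ∈ K, ∀ b ∈ K, a * b = b * a) ∧ (K.subgroupOf H).FiniteIndex) :
    ∃ a b : G, a ∈ H ∧ b ∈ H ∧
      Nonempty ((Subgroup.closure ({a, b} : Set G)) ≃* FreeGroup (Fin 2)) := by
  classical
  set K : Subgroup G := H ⊓ F with hK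
  have hKle : K ≤ H := inf_le_left
  have hKleF : K ≤ F := inf_le_right
  haveI : F.FiniteIndex := F_finiteIndex
  have hfin : (K.subgroupOf H).FiniteIndex := by
    rw [hK, Subgroup.inf_subgroupOf_left]
    infer_instance
  have hnab : ¬ (∀ a ∈ K, ∀ b ∈ K, a * b = b * a) := fun hcomm => hH ⟨K, hKle, hcomm, hfin⟩
  push_neg at hnab
  obtain ⟨u, hu, v, hv, huv⟩ := hnab
  haveI : IsFreeGroup (K.subgroupOf F) := inferInstance
  haveI : IsFreeGroup K := IsFreeGroup.ofMulEquiv (Subgroup.subgroupOfEquivOfLe hKleF)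
  set S := IsFreeGroup.Generators K with hSdef
  set e2 : K ≃* FreeGroup S := IsFreeGroup.toFreeGroup K with he2
  have hS : ∃ x y : S, x ≠ y := by
    by_contra hcon
    push_neg at hcon
    apply huv
    have h1 : e2 (⟨u, hu⟩ * ⟨v, hv⟩ : K) = e2 ((⟨v, hv⟩ : K) * ⟨u, hu⟩) := by
      rw [_root_.map_mul, _root_.map_mul]
      exact freegroup_comm_of_subsingleton hcon _ _
    have h2 := e2.injective h1
    exact congrArg Subtype.val h2
  obtain ⟨x, y, hxy⟩ := hS
  have hχ := chi_injective x y hxy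
  set χ := FreeGroup.lift (![FreeGroup.of x, FreeGroup.of y] : Fin 2 → FreeGroup S) with hχdef
  set ψ : FreeGroup S →* G := K.subtype.comp e2.symm.toMonoidHom with hψdef
  have hψ : Function.Injective ψ :=
    (Subgroup.subtype_injective K).comp e2.symm.injective
  have hmem : ∀ s : S, ψ (FreeGroup.of s) ∈ H := by
    intro s
    exact hKle (e2.symm (FreeGroup.of s)).2
  refine ⟨ψ (FreeGroup.of x), ψ (FreeGroup.of y), hmem x, hmem y, ?_⟩
  have hcl : Subgroup.closure {ψ (FreeGroup.of x), ψ (FreeGroup.of y)} =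
      Subgroup.map ψ (Subgroup.closure {FreeGroup.of x, FreeGroup.of y}) := by
    rw [MonoidHom.map_closure, Set.image_pair]
  have h2 : Subgroup.closure ({FreeGroup.of x, FreeGroup.of y} : Set (FreeGroup S)) =
      χ.range := by
    rw [hχdef, FreeGroup.range_lift_eq_closure, range_pair]
  exact ⟨(MulEquiv.subgroupCongr hcl).trans
    ((Subgroup.equivMapOfInjective _ ψ hψ).symm.trans
      ((MulEquiv.subgroupCongr h2).trans (MonoidHom.ofInjective hχ).symm))⟩


end Stmt19Aux

theorem stmt_19 (H : Subgroup (Matrix.SpecialLinearGroup (Fin 2) ℤ))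
    (hH : ¬ ∃ K : Subgroup (Matrix.SpecialLinearGroup (Fin 2) ℤ),
        K ≤ H ∧ (∀ a ∈ K, ∀ b ∈ K, a * b = b * a) ∧ (K.subgroupOf H).FiniteIndex) :
    ∃ a b : Matrix.SpecialLinearGroup (Fin 2) ℤ, a ∈ H ∧ b ∈ H ∧
      Nonempty
        ((Subgroup.closure ({a, b} : Set (Matrix.SpecialLinearGroup (Fin 2) ℤ))) ≃*
          FreeGroup (Fin 2)) :=
  Stmt19Aux.stmt_19 H hH
end
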